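/- Let X ⊆ (S³)³ be a compact set of plane configurations such that every mass distribution on ℝ³ with connected support admits an eight-partition by some configuration in X. Then for every finite point set P ⊂ ℝ³ there exists a configuration ℋ∞ ∈ X that eight-partitions P, i.e., each of the eight open octants determined by ℋ∞ contains at most |P|/8 points of P. -/

import Mathlib

open MeasureTheory
open scoped RealInnerProductSpace

noncomputable section

abbrev E3 := EuclideanSpace ℝ (Fin 3)
abbrev E4 := EuclideanSpace ℝ (Fin 4)

/-- Open half-space of ℝ³ determined by a point `w ∈ S³ ⊂ ℝ⁴` (parameterizing the oriented
plane `{x | w₀x₀ + w₁x₁ + w₂x₂ + w₃ = 0}`): the positive (`true`) or negative (`false`)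
side. -/
def sHalf (w : E4) (s : Bool) : Set E3 :=
  if s then {x | 0 < w 0 * x 0 + w 1 * x 1 + w 2 * x 2 + w 3}
  else {x | w 0 * x 0 + w 1 * x 1 + w 2 * x 2 + w 3 < 0}

/-- Open octant of a triple of planes parameterized by `(S³)³`. -/
def sOctant (H : Fin 3 → E4) (α : Fin 3 → Bool) : Set E3 :=
  ⋂ i, sHalf (H i) (α i)

def IsMassDistribution (μ : Measure E3) : Prop :=
  IsFiniteMeasure μ ∧ ∀ v : E3, v ≠ 0 → ∀ a : ℝ, μ {x | ⟪v, x⟫ = a} = 0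

/-- The support of a measure on ℝ³. -/
def msupport (μ : Measure E3) : Set E3 :=
  {x | ∀ r > 0, 0 < μ (Metric.ball x r)}

/-! ### Auxiliary material -/

open Metric Filter Topology ENNReal

/-- Coordinates are bounded by the Euclidean norm. -/
lemma coord_abs_le {n : ℕ} (w : EuclideanSpace ℝ (Fin n)) (i : Fin n) : |w i| ≤ ‖w‖ := by
  rw [EuclideanSpace.norm_eq]
  have h1 : |w i| = Real.sqrt (‖w i‖ ^ 2) := by
    rw [Real.sqrt_sq_eq_abs, Real.norm_eq_abs, abs_abs]
  rw [h1]
  exact Real.sqrt_le_sqrt (Finset.single_le_sum (f := fun j => ‖w j‖ ^ 2)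
    (fun j _ => sq_nonneg _) (Finset.mem_univ i))

/-- Affine hyperplanes in ℝ³ are Lebesgue-null. -/
lemma plane_null (v : E3) (hv : v ≠ 0) (a : ℝ) : volume {x : E3 | ⟪v, x⟫ = a} = 0 := by
  have hvv : ⟪v, v⟫ ≠ 0 := inner_self_ne_zero.mpr hv
  set p : E3 := (a / ⟪v, v⟫) • v with hp
  have hpa : ⟪v, p⟫ = a := by
    rw [hp, real_inner_smul_right]
    exact div_mul_cancel₀ a hvv
  set K : Submodule ℝ E3 := LinearMap.ker ((innerSL ℝ v : E3 →L[ℝ] ℝ) : E3 →ₗ[ℝ] ℝ) with hK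
  have hKne : K ≠ ⊤ := by
    intro h
    have hvK : v ∈ K := h ▸ Submodule.mem_top
    exact hvv (by simpa [hK] using hvK)
  have hset : {x : E3 | ⟪v, x⟫ = a} = ↑(AffineSubspace.mk' p K) := by
    ext x
    simp only [Set.mem_setOf_eq, SetLike.mem_coe, AffineSubspace.mem_mk']
    constructor
    · intro hx
      have hz : ⟪v, x - p⟫ = 0 := by rw [inner_sub_right, hx, hpa, sub_self]
      rw [hK, LinearMap.mem_ker]
      simpa using hz
    · intro hx
      have hz : ⟪v, x - p⟫ = 0 := by
        rw [hK, LinearMap.mem_ker] at hx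
        simpa using hx
      rw [inner_sub_right, hpa] at hz
      linarith
  rw [hset]
  refine Measure.addHaar_affineSubspace volume _ ?_
  intro h
  apply hKne
  have := AffineSubspace.direction_mk' p K
  rw [h] at this
  simpa [AffineSubspace.direction_top] using this.symm

/-- Normalized uniform measure on a set. -/
def nuM (c : Set E3) : Measure E3 := (volume c)⁻¹ • volume.restrict c

lemma nuM_apply_le (c s : Set E3) : nuM c s ≤ (volume c)⁻¹ * volume s := by
  rw [nuM, Measure.smul_apply, smul_eq_mul]
  exact mul_le_mul' le_rfl (Measure.restrict_le_self s)

lemma nuM_ball_univ (p : E3) {ε : ℝ} (hε : 0 < ε) : nuM (ball p ε) Set.univ = 1 := by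
  rw [nuM, Measure.smul_apply, Measure.restrict_apply_univ, smul_eq_mul]
  exact ENNReal.inv_mul_cancel (measure_ball_pos volume p hε).ne' measure_ball_lt_top.ne

lemma nuM_ball_self (p : E3) {ε : ℝ} (hε : 0 < ε) : nuM (ball p ε) (ball p ε) = 1 := by
  rw [nuM, Measure.smul_apply, Measure.restrict_apply_self, smul_eq_mul]
  exact ENNReal.inv_mul_cancel (measure_ball_pos volume p hε).ne' measure_ball_lt_top.ne

/-- Limit argument for finite point sets: if `X ⊆ (S³)³` is a compact set of plane
configurations eight-partitioning every mass distribution with connected support, then every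
finite point set `P` admits an eight-partition by some configuration in `X` (each open octant
contains at most `|P|/8` points). -/
theorem stmt14 (X : Set (Fin 3 → E4)) (hXs : ∀ H ∈ X, ∀ i, ‖H i‖ = 1) (hXc : IsCompact X)
    (hpart : ∀ μ : Measure E3, IsMassDistribution μ → IsConnected (msupport μ) →
      ∃ H ∈ X, ∀ α : Fin 3 → Bool, μ (sOctant H α) = μ Set.univ / 8)
    (P : Finset E3) :
    ∃ H ∈ X, ∀ α : Fin 3 → Bool,
      (((P : Set E3) ∩ sOctant H α).ncard : ℝ) ≤ (P.card : ℝ) / 8 := by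
  classical
  -- a big radius
  set R : ℝ := (∑ p ∈ P, ‖p‖) + 1 with hRdef
  have hR1 : (1 : ℝ) ≤ R := by
    have : (0:ℝ) ≤ ∑ p ∈ P, ‖p‖ := Finset.sum_nonneg fun p _ => norm_nonneg p
    simp only [hRdef]; linarith
  have hR0 : (0 : ℝ) < R := by linarith
  have hRp : ∀ p ∈ P, ‖p‖ + 1 ≤ R := by
    intro p hp
    have : ‖p‖ ≤ ∑ q ∈ P, ‖q‖ :=
      Finset.single_le_sum (fun q _ => norm_nonneg q) hp
    simp only [hRdef]; linarith
  -- the radii and approximating measures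
  set ε : ℕ → ℝ := fun n => ((n : ℝ) + 1)⁻¹ with hεdef
  have hεpos : ∀ n, 0 < ε n := by
    intro n; simp only [hεdef]; positivity
  have hεle : ∀ n, ε n ≤ 1 := by
    intro n
    simp only [hεdef]
    rw [inv_le_one_iff₀]
    right; linarith [Nat.cast_nonneg (α := ℝ) n]
  set c : ℕ → ℝ≥0∞ := fun n => ((n : ℝ≥0∞) + 1)⁻¹ with hcdef
  have hc0 : ∀ n, c n ≠ 0 := by
    intro n
    simp only [hcdef]
    exact ENNReal.inv_ne_zero.mpr (by finiteness)
  set μ : ℕ → Measure E3 := fun n =>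
    (∑ p ∈ P, nuM (ball p (ε n))) + c n • nuM (ball (0 : E3) R) with hμdef
  -- small balls inside the big ball
  have hball_sub : ∀ n, ∀ p ∈ P, ball p (ε n) ⊆ closedBall (0 : E3) R := by
    intro n p hp y hy
    rw [mem_ball, dist_eq_norm] at hy
    rw [mem_closedBall, dist_zero_right]
    have h1 : ‖y‖ ≤ ‖y - p‖ + ‖p‖ := by
      calc ‖y‖ = ‖(y - p) + p‖ := by rw [sub_add_cancel]
        _ ≤ ‖y - p‖ + ‖p‖ := norm_add_le _ _
    have h2 := hRp p hp
    have h3 := hεle n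
    linarith
  -- total mass
  have huniv : ∀ n, μ n Set.univ = (P.card : ℝ≥0∞) + c n := by
    intro n
    rw [hμdef]
    simp only [Measure.add_apply, Measure.finset_sum_apply, Measure.smul_apply, smul_eq_mul]
    rw [nuM_ball_univ 0 hR0]
    have : ∀ p ∈ P, nuM (ball p (ε n)) Set.univ = 1 := fun p _ => nuM_ball_univ p (hεpos n)
    rw [Finset.sum_congr rfl this]
    simp
  -- mass distribution
  have hmass : ∀ n, IsMassDistribution (μ n) := by
    intro n
    constructor
    · constructor
      rw [huniv n]
      have : c n < ∞ := by
        simp only [hcdef]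
        exact ENNReal.inv_lt_top.mpr (lt_of_lt_of_le one_pos le_add_self)
      exact ENNReal.add_lt_top.mpr ⟨ENNReal.natCast_lt_top _, this⟩
    · intro v hv a
      have hnull : volume {x : E3 | ⟪v, x⟫ = a} = 0 := plane_null v hv a
      have hle : ∀ s : Set E3, nuM s {x : E3 | ⟪v, x⟫ = a} = 0 := by
        intro s
        refine le_antisymm ?_ zero_le
        calc nuM s {x : E3 | ⟪v, x⟫ = a} ≤ (volume s)⁻¹ * volume {x : E3 | ⟪v, x⟫ = a} :=
              nuM_apply_le _ _
          _ = 0 := by rw [hnull, mul_zero]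
      rw [hμdef]
      simp only [Measure.add_apply, Measure.finset_sum_apply, Measure.smul_apply, smul_eq_mul]
      rw [Finset.sum_congr rfl (fun p _ => hle (ball p (ε n))), hle (ball (0:E3) R)]
      simp
  -- support
  have hsupp : ∀ n, msupport (μ n) = closedBall (0 : E3) R := by
    intro n
    ext x
    simp only [msupport, Set.mem_setOf_eq]
    constructor
    · intro hx
      by_contra hxR
      rw [mem_closedBall, dist_zero_right, not_le] at hxR
      set r : ℝ := ‖x‖ - R with hrdef
      have hr : 0 < r := by simp only [hrdef]; linarith
      have hdisj : ∀ y ∈ ball x r, y ∉ closedBall (0 : E3) R := by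
        intro y hy hyR
        rw [mem_ball, dist_eq_norm, norm_sub_rev] at hy
        rw [mem_closedBall, dist_zero_right] at hyR
        have h : ‖x‖ ≤ ‖x - y‖ + ‖y‖ := by
          calc ‖x‖ = ‖(x - y) + y‖ := by rw [sub_add_cancel]
            _ ≤ ‖x - y‖ + ‖y‖ := norm_add_le _ _
        simp only [hrdef] at hy
        linarith
      have hz : μ n (ball x r) = 0 := by
        have hint : ∀ p ∈ P, volume (ball x r ∩ ball p (ε n)) = 0 := by
          intro p hp
          refine measure_mono_null ?_ (measure_empty (μ := volume))
          rintro y ⟨hy1, hy2⟩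
          exact absurd (hball_sub n p hp hy2) (hdisj y hy1)
        have hint2 : volume (ball x r ∩ ball (0:E3) R) = 0 := by
          refine measure_mono_null ?_ (measure_empty (μ := volume))
          rintro y ⟨hy1, hy2⟩
          exact absurd (ball_subset_closedBall hy2) (hdisj y hy1)
        rw [hμdef]
        simp only [Measure.add_apply, Measure.finset_sum_apply, Measure.smul_apply, smul_eq_mul]
        have e1 : ∀ p ∈ P, nuM (ball p (ε n)) (ball x r) = 0 := by
          intro p hp
          rw [nuM, Measure.smul_apply, smul_eq_mul,
            Measure.restrict_apply measurableSet_ball, hint p hp, mul_zero]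
        have e2 : nuM (ball (0:E3) R) (ball x r) = 0 := by
          rw [nuM, Measure.smul_apply, smul_eq_mul,
            Measure.restrict_apply measurableSet_ball, hint2, mul_zero]
        rw [Finset.sum_congr rfl e1, e2]
        simp
      have := hx r hr
      rw [hz] at this
      exact lt_irrefl 0 this
    · intro hx r hr
      have hne : (ball x r ∩ ball (0:E3) R).Nonempty := by
        have hxcl : x ∈ closure (ball (0:E3) R) := by
          rw [closure_ball (0:E3) hR0.ne']
          exact hx
        rw [Metric.mem_closure_iff] at hxcl
        obtain ⟨y, hy1, hy2⟩ := hxcl r hr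
        exact ⟨y, by rwa [mem_ball, dist_comm], hy1⟩
      have hpos : 0 < volume (ball x r ∩ ball (0:E3) R) :=
        (isOpen_ball.inter isOpen_ball).measure_pos volume hne
      have key : 0 < (c n • nuM (ball (0:E3) R)) (ball x r) := by
        rw [Measure.smul_apply, smul_eq_mul, nuM, Measure.smul_apply, smul_eq_mul,
          Measure.restrict_apply measurableSet_ball]
        exact ENNReal.mul_pos (hc0 n)
          (ENNReal.mul_pos (ENNReal.inv_ne_zero.mpr measure_ball_lt_top.ne) hpos.ne').ne'
      refine key.trans_le ?_
      rw [hμdef]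
      simp only [Measure.add_apply]
      exact le_add_self
  -- connectedness of the support
  have hconn : ∀ n, IsConnected (msupport (μ n)) := by
    intro n
    rw [hsupp n]
    exact (convex_closedBall (0:E3) R).isConnected
      ⟨0, by simpa [mem_closedBall] using hR0.le⟩
  -- choose partitioning configurations and a convergent subsequence
  choose Hs hHsX hHs using fun n => hpart (μ n) (hmass n) (hconn n)
  obtain ⟨H, hHX, φ, hφ, hconv⟩ := hXc.tendsto_subseq hHsX
  refine ⟨H, hHX, ?_⟩
  intro α
  set K : Finset E3 := P.filter (fun p => p ∈ sOctant H α) with hKdef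
  have hKset : (P : Set E3) ∩ sOctant H α = ↑K := by
    ext y
    simp [hKdef, and_comm]
  rw [hKset, Set.ncard_coe_finset]
  -- it suffices to show 8 * K.card ≤ P.card
  suffices h : 8 * K.card ≤ P.card by
    have : (8 : ℝ) * K.card ≤ P.card := by exact_mod_cast h
    linarith
  -- the affine evaluation function
  set F : E3 → E4 → ℝ := fun p w => w 0 * p 0 + w 1 * p 1 + w 2 * p 2 + w 3 with hFdef
  have hFcont : ∀ p : E3, Continuous (F p) := by
    intro p
    exact ((((EuclideanSpace.proj (0:Fin 4)).continuous.mul continuous_const).add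
      ((EuclideanSpace.proj (1:Fin 4)).continuous.mul continuous_const)).add
      ((EuclideanSpace.proj (2:Fin 4)).continuous.mul continuous_const)).add
      (EuclideanSpace.proj (3:Fin 4)).continuous
  set sg : Fin 3 → ℝ := fun i => if α i then 1 else -1 with hsgdef
  -- limit positivity
  have hKpos : ∀ p ∈ K, ∀ i : Fin 3, 0 < sg i * F p (H i) := by
    intro p hp i
    rw [hKdef, Finset.mem_filter] at hp
    have hmem : p ∈ sHalf (H i) (α i) := Set.mem_iInter.mp hp.2 i
    rw [sHalf] at hmem
    by_cases hα : α i
    · rw [if_pos hα, Set.mem_setOf_eq] at hmem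
      simp only [hsgdef, if_pos hα, one_mul, hFdef]
      exact hmem
    · rw [if_neg hα, Set.mem_setOf_eq] at hmem
      simp only [hsgdef, if_neg hα, neg_one_mul, hFdef]
      linarith
  -- convergence facts
  have hconvi : ∀ i : Fin 3, Tendsto (fun n => Hs (φ n) i) atTop (𝓝 (H i)) := by
    intro i
    exact (continuous_apply i).continuousAt.tendsto.comp hconv
  have hεconv : Tendsto (fun n => ε (φ n)) atTop (𝓝 0) := by
    have h1 : Tendsto ε atTop (𝓝 0) := by
      simp only [hεdef]
      exact tendsto_one_div_add_atTop_nhds_zero_nat.congr (by intro n; rw [one_div])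
    exact h1.comp hφ.tendsto_atTop
  -- eventually each relevant coordinate function is strongly positive
  have hev : ∀ᶠ n in atTop, ∀ p ∈ K, ∀ i : Fin 3,
      3 * ε (φ n) < sg i * F p (Hs (φ n) i) := by
    rw [Filter.eventually_all_finset]
    intro p hp
    rw [Filter.eventually_all]
    intro i
    have hT : Tendsto (fun n => sg i * F p (Hs (φ n) i) - 3 * ε (φ n)) atTop
        (𝓝 (sg i * F p (H i) - 3 * 0)) := by
      exact (((hFcont p).continuousAt.tendsto.comp (hconvi i)).const_mul (sg i)).sub
        (hεconv.const_mul 3)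
    have hpos0 : (0:ℝ) < sg i * F p (H i) - 3 * 0 := by
      simpa using hKpos p hp i
    filter_upwards [hT.eventually (eventually_gt_nhds hpos0)] with n hn
    linarith
  have hev2 : ∀ᶠ n in atTop, 1 ≤ φ n :=
    (eventually_ge_atTop 1).mono fun n hn => le_trans hn hφ.le_apply
  obtain ⟨n₀, hn1, hn2⟩ := (hev.and hev2).exists
  set m := φ n₀ with hmdef
  -- the small balls around points of K are inside the octant of Hs m
  have hsub : ∀ p ∈ K, ball p (ε m) ⊆ sOctant (Hs m) α := by
    intro p hp x hx
    rw [mem_ball, dist_eq_norm] at hx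
    rw [sOctant, Set.mem_iInter]
    intro i
    have hb := hn1 p hp i
    set w := Hs m i with hwdef
    have hwnorm : ‖w‖ = 1 := hXs (Hs m) (hHsX m) i
    have hcoordw : ∀ j : Fin 4, |w j| ≤ 1 := by
      intro j
      calc |w j| ≤ ‖w‖ := coord_abs_le w j
        _ = 1 := hwnorm
    have hcoordx : ∀ j : Fin 3, |x j - p j| ≤ ε m := by
      intro j
      calc |x j - p j| = |(x - p) j| := by rw [PiLp.sub_apply]
        _ ≤ ‖x - p‖ := coord_abs_le (x - p) j
        _ ≤ ε m := le_of_lt hx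
    have hbound : ∀ j : Fin 3, |w (Fin.castSucc j) * (x j - p j)| ≤ ε m := by
      intro j
      rw [abs_mul]
      calc |w (Fin.castSucc j)| * |x j - p j| ≤ 1 * ε m :=
        mul_le_mul (hcoordw _) (hcoordx j) (abs_nonneg _) zero_le_one
        _ = ε m := one_mul _
    have hb0 : |w 0 * (x 0 - p 0)| ≤ ε m := by simpa using hbound 0
    have hb1 : |w 1 * (x 1 - p 1)| ≤ ε m := by simpa using hbound 1
    have hb2 : |w 2 * (x 2 - p 2)| ≤ ε m := by simpa using hbound 2
    have l0 := abs_le.mp hb0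
    have l1 := abs_le.mp hb1
    have l2 := abs_le.mp hb2
    have hexp : w 0 * x 0 + w 1 * x 1 + w 2 * x 2 + w 3
        = F p w + (w 0 * (x 0 - p 0) + w 1 * (x 1 - p 1) + w 2 * (x 2 - p 2)) := by
      simp only [hFdef]; ring
    rw [sHalf]
    by_cases hα : α i
    · rw [if_pos hα]
      simp only [hsgdef, if_pos hα, one_mul] at hb
      show 0 < w 0 * x 0 + w 1 * x 1 + w 2 * x 2 + w 3
      rw [hexp]
      linarith [l0.1, l1.1, l2.1]
    · rw [if_neg hα]
      simp only [hsgdef, if_neg hα, neg_one_mul] at hb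
      show w 0 * x 0 + w 1 * x 1 + w 2 * x 2 + w 3 < 0
      rw [hexp]
      linarith [l0.2, l1.2, l2.2]
  -- the measure of the octant bounds the K-count
  have hKle : (K.card : ℝ≥0∞) ≤ μ m (sOctant (Hs m) α) := by
    calc (K.card : ℝ≥0∞) = ∑ p ∈ K, 1 := by simp
      _ ≤ ∑ p ∈ K, nuM (ball p (ε m)) (sOctant (Hs m) α) := by
          refine Finset.sum_le_sum fun p hp => ?_
          calc (1:ℝ≥0∞) = nuM (ball p (ε m)) (ball p (ε m)) := (nuM_ball_self p (hεpos m)).symm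
            _ ≤ nuM (ball p (ε m)) (sOctant (Hs m) α) := measure_mono (hsub p hp)
      _ ≤ ∑ p ∈ P, nuM (ball p (ε m)) (sOctant (Hs m) α) :=
          Finset.sum_le_sum_of_subset (Finset.filter_subset _ _)
      _ = (∑ p ∈ P, nuM (ball p (ε m))) (sOctant (Hs m) α) :=
          (Measure.finset_sum_apply _ _ _).symm
      _ ≤ μ m (sOctant (Hs m) α) := by
          rw [hμdef]
          simp only [Measure.add_apply]
          exact le_self_add
  -- use the eight-partition property
  rw [hHs m α, huniv m] at hKle
  have h8 : (K.card : ℝ≥0∞) * 8 ≤ (P.card : ℝ≥0∞) + c m := by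
    rw [← ENNReal.le_div_iff_mul_le (Or.inl (by norm_num)) (Or.inl (by norm_num))]
    exact hKle
  have hcm1 : c m < 1 := by
    simp only [hcdef]
    rw [ENNReal.inv_lt_one]
    have : (1:ℝ≥0∞) ≤ (m : ℝ≥0∞) := by exact_mod_cast hn2
    calc (1:ℝ≥0∞) < 1 + 1 := by norm_num
      _ ≤ (m : ℝ≥0∞) + 1 := by exact add_le_add this le_rfl
  have hlt : ((K.card * 8 : ℕ) : ℝ≥0∞) < ((P.card + 1 : ℕ) : ℝ≥0∞) := by
    push_cast
    calc (K.card : ℝ≥0∞) * 8 ≤ (P.card : ℝ≥0∞) + c m := h8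
      _ < (P.card : ℝ≥0∞) + 1 := by
          exact ENNReal.add_lt_add_left (ENNReal.natCast_ne_top _) hcm1
  have hnat : K.card * 8 < P.card + 1 := by exact_mod_cast hlt
  omega
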